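/- arXiv:2206.03047 — 2 statements merged into one kernel-verified Lean document; each statement's English description precedes it below -/
import Mathlib

section
/- Let σ be the Fibonacci substitution on the alphabet {α, β}, σ(α) = αβ, σ(β) = α, and let σ_0σ_1σ_2⋯ = σ^∞(α) be its fixed point (indexed from 0). Define τ_1 = 1 and, for n ≥ 2, τ_n = 1 if σ_{⌊n/2⌋−1} = β and τ_n = 0 otherwise. For every n ≥ 2, let (h_{F_{n+2}}, …, h_{F_{n+3}−1}) be the list obtained from N_n = (g_{F_{n+1}}, …, g_{F_{n+2}−1}) by keeping each word ending in 1 once and repeating each word ending in 0 twice consecutively (this list indeed has F_{n+1} entries). Then g_i = h_i τ_i (the word h_i with the digit τ_i appended at its right end) for every F_{n+2} ≤ i ≤ F_{n+3} − 1; that is, this procedure produces N_{n+1} from N_n. -/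
/-- A ZF-word: a binary word (leftmost digit at the head of the list) with no two
consecutive digits `1`. -/
def ZFword (w : List Bool) : Prop :=
  w.Chain' fun a b => ¬(a = true ∧ b = true)

/-- The lists `N_n` of binary words: `N_0 = ()`, `N_1 = (1)` and, for `n ≥ 2`,
`N_n = 10·rev(N_{n-1}') ++ 10·rev(N_{n-2})`, where `L'` removes the leftmost letter
of each word of `L`, `rev` reverses the order of the list and `10·L` prefixes `10`
to each word of `L`. -/
def Nlist : ℕ → List (List Bool)
  | 0 => []
  | 1 => [[true]]
  | (n + 2) =>
      ((Nlist (n + 1)).map List.tail).reverse.map (fun w => true :: false :: w) ++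
        (Nlist n).reverse.map (fun w => true :: false :: w)

/-- The `i`-th term `g_i` (for `i ≥ 1`) of the infinite list
`G = N_1 ++ N_2 ++ N_3 ++ ⋯`; the block `N_n` occupies the (1-indexed) positions
`F (n+1), …, F (n+2) - 1` of `G`. -/
def Gword (i : ℕ) : List Bool :=
  (((List.range (i + 2)).map Nlist).flatten).getD (i - 1) []

/-- The Hamming distance of two binary words (leftmost digit at the head), the shorter
word being padded with leading `0`s: the number of positions (counted from the right)
at which the two words differ. -/
def hammingWords (w w' : List Bool) : ℕ :=
  ((Finset.range (max w.length w'.length)).filter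
    (fun i => w.reverse.getD i false ≠ w'.reverse.getD i false)).card

/-- The Fibonacci substitution `σ(α) = αβ`, `σ(β) = α` on words over `{α, β}`, with
`α = false` and `β = true`. -/
def fibSub : List Bool → List Bool
  | [] => []
  | a :: t => (if a then [false] else [false, true]) ++ fibSub t

/-- The `k`-th letter (indexed from `0`) of the fixed point `σ^∞(α)` of the Fibonacci
substitution: `true` codes `β`, `false` codes `α`.  (The word `σ^[k+1](α)` has length
`F (k+3) > k`, and these words are prefixes of each other.) -/
def fibFixedPoint (k : ℕ) : Bool :=
  (fibSub^[k + 1] [false]).getD k false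

/-- The digit `τ_i`: `τ_1 = 1` and, for `i ≥ 2`, `τ_i = 1` iff `σ_{⌊i/2⌋ - 1} = β`. -/
def tauDigit (i : ℕ) : Bool :=
  if i ≤ 1 then true else fibFixedPoint (i / 2 - 1)

/-- The duplication procedure: each word of `L` ending in `1` is kept once, each word
ending in `0` is repeated twice consecutively. -/
def dupList (L : List (List Bool)) : List (List Bool) :=
  L.flatMap fun w => if w.getLast? = some true then [w] else [w, w]


namespace GrayAux


def W (m : ℕ) : List Bool := fibSub^[m] [false]

lemma fibSub_append (u v : List Bool) : fibSub (u ++ v) = fibSub u ++ fibSub v := by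
  induction u with
  | nil => rfl
  | cons a t ih => simp [fibSub, ih]

lemma fibSub_iter_append (k : ℕ) (u v : List Bool) :
    fibSub^[k] (u ++ v) = fibSub^[k] u ++ fibSub^[k] v := by
  induction k generalizing u v with
  | zero => rfl
  | succ k ih => simp [Function.iterate_succ_apply, fibSub_append, ih]

lemma W_succ_succ (m : ℕ) : W (m + 2) = W (m + 1) ++ W m := by
  have h1 : W (m + 2) = fibSub^[m+1] ([false] ++ [true]) := by
    rw [W, Function.iterate_succ_apply]
    rfl
  have h2 : fibSub^[m+1] [true] = W m := by
    rw [Function.iterate_succ_apply]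
    rfl
  rw [h1, fibSub_iter_append, h2]
  rfl

lemma Wlen : ∀ m, (W m).length = Nat.fib (m + 2)
  | 0 => rfl
  | 1 => rfl
  | (m+2) => by
      have e1 : Nat.fib (m+1+2) = Nat.fib (m+3) := rfl
      have e2 : Nat.fib (m+2+2) = Nat.fib (m+4) := rfl
      have e3 : Nat.fib (m+2+1) = Nat.fib (m+3) := rfl
      rw [W_succ_succ, List.length_append, Wlen (m+1), Wlen m]
      have hF : Nat.fib (m+2+2) = Nat.fib (m+2) + Nat.fib (m+2+1) := Nat.fib_add_two
      omega

lemma W_prefix_succ : ∀ m, W m <+: W (m + 1)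
  | 0 => ⟨[true], rfl⟩
  | (m+1) => by
      rw [W_succ_succ]
      exact List.prefix_append _ _

lemma W_mono {m m' : ℕ} (h : m ≤ m') : W m <+: W m' := by
  induction h with
  | refl => exact List.prefix_refl _
  | step h ih => exact ih.trans (W_prefix_succ _)

lemma getD_prefix {u v : List Bool} (h : u <+: v) (k : ℕ) (hk : k < u.length) :
    v.getD k false = u.getD k false := by
  obtain ⟨t, rfl⟩ := h
  rw [List.getD_eq_getElem _ _ (by simp; omega), List.getD_eq_getElem _ _ hk]
  exact List.getElem_append_left hk

lemma fib_big : ∀ k, k + 2 ≤ Nat.fib (k + 3)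
  | 0 => by norm_num
  | (k+1) => by
      have h1 := fib_big k
      have h2 : 1 ≤ Nat.fib (k+2) := Nat.fib_pos.2 (by omega)
      have e1 : Nat.fib (k+2+1) = Nat.fib (k+3) := rfl
      rw [show k+1+3 = (k+2)+2 from rfl, Nat.fib_add_two, e1]
      omega

lemma fp_eq_W (m k : ℕ) (hk : k < Nat.fib (m + 2)) :
    fibFixedPoint k = (W m).getD k false := by
  have hk2 : k < (W (k+1)).length := by
    have e1 : Nat.fib (k+1+2) = Nat.fib (k+3) := rfl
    rw [Wlen, e1]; have := fib_big k; omega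
  rcases le_total m (k + 1) with h | h
  · exact getD_prefix (W_mono h) k (by rw [Wlen]; exact hk)
  · exact (getD_prefix (W_mono h) k hk2).symm

def T (m : ℕ) : List Bool := if m % 2 = 0 then [true, false] else [false, true]

def Q : ℕ → List Bool
  | 0 => [false]
  | 1 => [false, true, false]
  | (m+2) => W (m + 3) ++ Q m

lemma T_per (m : ℕ) : T (m + 2) = T m := by
  simp [T, Nat.add_mod_right]

lemma T_rev (m : ℕ) : (T (m + 1)).reverse = T m := by
  rcases Nat.mod_two_eq_zero_or_one m with h | h <;>
    simp [T, h, Nat.add_mod, Nat.succ_mod_two_eq_zero_iff, Nat.succ_mod_two_eq_one_iff]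

lemma Tlen (m : ℕ) : (T m).length = 2 := by
  unfold T; split <;> rfl

lemma WQT : ∀ m, W (m + 2) = Q m ++ T m
  | 0 => by decide
  | 1 => by decide
  | (m+2) => by
      have e4 : W (m+2+2) = W (m+3) ++ W (m+2) := W_succ_succ (m+2)
      rw [e4, WQT m, T_per]
      show _ = (W (m+3) ++ Q m) ++ T m
      rw [List.append_assoc]

lemma swap : ∀ m, ∃ C : List Bool,
    W (m + 3) ++ W (m + 2) = C ++ T m ∧ W (m + 2) ++ W (m + 3) = C ++ T (m + 1)
  | 0 => ⟨[false, true, false, false, true, false], by constructor <;> decide⟩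
  | (m+1) => by
      obtain ⟨C, h1, h2⟩ := swap m
      have e4 : W (m+1+3) = W (m+3) ++ W (m+2) := W_succ_succ (m+2)
      refine ⟨W (m + 3) ++ C, ?_, ?_⟩
      · show W (m+1+3) ++ W (m+3) = (W (m+3) ++ C) ++ T (m+1)
        rw [e4, List.append_assoc, h2, List.append_assoc]
      · show W (m+3) ++ W (m+1+3) = (W (m+3) ++ C) ++ T (m+2)
        rw [e4, h1, ← T_per m, ← List.append_assoc]

lemma Q_pal : ∀ m, (Q m).reverse = Q m
  | 0 => by decide
  | 1 => by decide
  | (m+2) => by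
      obtain ⟨C, h3, h4⟩ := swap m
      have k1 : W (m + 3) ++ Q m = C := by
        have h : (W (m + 3) ++ Q m) ++ T m = C ++ T m := by
          rw [List.append_assoc, ← WQT m, h3]
        exact List.append_cancel_right h
      have k2 : W (m + 2) ++ Q (m + 1) = C := by
        have h : (W (m + 2) ++ Q (m + 1)) ++ T (m + 1) = C ++ T (m + 1) := by
          rw [List.append_assoc, ← WQT (m+1), h4]
        exact List.append_cancel_right h
      show (W (m + 3) ++ Q m).reverse = W (m + 3) ++ Q m
      calc (W (m + 3) ++ Q m).reverse
          = ((Q (m+1) ++ T (m+1)) ++ Q m).reverse := by rw [← WQT (m+1)]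
        _ = (Q m).reverse ++ ((T (m+1)).reverse ++ (Q (m+1)).reverse) := by
            simp [List.reverse_append]
        _ = Q m ++ (T m ++ Q (m+1)) := by rw [Q_pal m, Q_pal (m+1), T_rev]
        _ = (Q m ++ T m) ++ Q (m+1) := by rw [List.append_assoc]
        _ = W (m + 2) ++ Q (m+1) := by rw [← WQT m]
        _ = W (m + 3) ++ Q m := by rw [k2, ← k1]

lemma Qlen (m : ℕ) : (Q m).length + 2 = Nat.fib (m + 4) := by
  have h := congrArg List.length (WQT m)
  rw [Wlen, List.length_append, Tlen] at h
  have e2 : Nat.fib (m+2+2) = Nat.fib (m+4) := rfl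
  rw [e2] at h
  omega

lemma palin_fp (m p q : ℕ) (hpq : p + q = Nat.fib (m + 4) - 3) :
    fibFixedPoint p = fibFixedPoint q := by
  have hf : 3 ≤ Nat.fib (m + 4) := by
    have := fib_big (m + 1)
    have e1 : Nat.fib (m+1+3) = Nat.fib (m+4) := rfl
    omega
  have hQl := Qlen m
  have hp : p < (Q m).length := by omega
  have hq : q < (Q m).length := by omega
  have e : ∀ r, r < (Q m).length → fibFixedPoint r = (Q m).getD r false := by
    intro r hr
    have e2 : Nat.fib (m+2+2) = Nat.fib (m+4) := rfl
    rw [fp_eq_W (m + 2) r (by rw [e2]; omega), WQT m]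
    rw [List.getD_eq_getElem _ _ (by rw [List.length_append, Tlen]; omega),
      List.getD_eq_getElem _ _ hr]
    exact List.getElem_append_left hr
  rw [e p hp, e q hq]
  have hidx : (Q m).length - 1 - p = q := by omega
  subst hidx
  rw [List.getD_eq_getElem _ _ hp, List.getD_eq_getElem _ _ hq]
  calc (Q m)[p]'hp = (Q m).reverse[p]'(by simpa using hp) :=
        (List.getElem_of_eq (Q_pal m) _).symm
    _ = (Q m)[(Q m).length - 1 - p] := List.getElem_reverse _




lemma fib_rec (n : ℕ) : Nat.fib (n + 2) = Nat.fib n + Nat.fib (n + 1) := Nat.fib_add_two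

lemma Nlen : ∀ n, (Nlist n).length = Nat.fib n
  | 0 => rfl
  | 1 => rfl
  | (n+2) => by
      simp only [Nlist, List.length_append, List.length_map, List.length_reverse,
        Nlen (n+1), Nlen n]
      have := fib_rec n
      omega

lemma Nword_len : ∀ n, ∀ w ∈ Nlist n, w.length = n
  | 0 => by simp [Nlist]
  | 1 => by intro w hw; simp [Nlist] at hw; simp [hw]
  | (n+2) => by
      intro w hw
      simp only [Nlist, List.mem_append, List.mem_map, List.mem_reverse] at hw
      rcases hw with ⟨v, ⟨u, hu, rfl⟩, rfl⟩ | ⟨v, hv, rfl⟩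
      · have := Nword_len (n+1) u hu
        simp [List.length_tail, this]
      · have := Nword_len n v hv
        simp [this]

lemma Nword_ne_nil {n : ℕ} (hn : 1 ≤ n) {w : List Bool} (hw : w ∈ Nlist n) : w ≠ [] := by
  have := Nword_len n w hw
  intro h; rw [h] at this; simp at this; omega

lemma dup_append (L1 L2 : List (List Bool)) :
    dupList (L1 ++ L2) = dupList L1 ++ dupList L2 := by
  simp [dupList, List.flatMap_append]

lemma dup_reverse (L : List (List Bool)) : dupList L.reverse = (dupList L).reverse := by
  induction L with
  | nil => rfl
  | cons a L ih =>
      rw [List.reverse_cons, dup_append, ih]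
      show _ ++ dupList [a] = _
      rw [show dupList (a :: L) = (if a.getLast? = some true then [a] else [a, a]) ++ dupList L from rfl]
      rw [List.reverse_append]
      congr 1
      show dupList [a] = _
      rw [show dupList [a] = (if a.getLast? = some true then [a] else [a, a]) ++ [] from rfl]
      split <;> rfl

lemma dup_map (g : List Bool → List Bool) (L : List (List Bool))
    (h : ∀ w ∈ L, ((g w).getLast? = some true ↔ w.getLast? = some true)) :
    dupList (L.map g) = (dupList L).map g := by
  induction L with
  | nil => rfl
  | cons a L ih =>
      rw [List.map_cons]
      rw [show dupList (g a :: L.map g) =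
        (if (g a).getLast? = some true then [g a] else [g a, g a]) ++ dupList (L.map g) from rfl]
      rw [show dupList (a :: L) = (if a.getLast? = some true then [a] else [a, a]) ++ dupList L from rfl]
      rw [ih (fun w hw => h w (List.mem_cons_of_mem _ hw)), List.map_append]
      congr 1
      by_cases ha : a.getLast? = some true
      · rw [if_pos ha, if_pos ((h a (List.mem_cons_self)).2 ha)]; rfl
      · rw [if_neg ha, if_neg (fun hc => ha ((h a (List.mem_cons_self)).1 hc))]; rfl

lemma glast (v : List Bool) :
    ((true :: false :: v).getLast? = some true ↔ v.getLast? = some true) := by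
  cases v with
  | nil => simp
  | cons b u => rw [List.getLast?_cons_cons, List.getLast?_cons_cons]

lemma getLast?_cons2 (w : List Bool) (hw : w ≠ []) :
    (true :: false :: w).getLast? = w.getLast? := by
  rw [show true :: false :: w = [true, false] ++ w from rfl,
    List.getLast?_append_of_ne_nil _ hw]

lemma getLast?_tail (w : List Bool) (hw : 2 ≤ w.length) :
    w.tail.getLast? = w.getLast? := by
  match w, hw with
  | a :: b :: u, _ =>
      show (b :: u).getLast? = _
      rw [List.getLast?_cons_cons]

lemma dropLast_cons2 (w : List Bool) (hw : w ≠ []) :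
    (true :: false :: w).dropLast = true :: false :: w.dropLast := by
  cases w with
  | nil => exact absurd rfl hw
  | cons b u => rfl

lemma tail_dropLast (l : List Bool) : l.dropLast.tail = l.tail.dropLast := by
  match l with
  | [] => rfl
  | [a] => rfl
  | a :: b :: t => rfl

lemma dupA : ∀ n, 1 ≤ n → dupList (Nlist n) = (Nlist (n + 1)).map List.dropLast
  | 1, _ => by decide
  | 2, _ => by decide
  | (n+3), _ => by
      have ih1 := dupA (n+2) (by omega)
      have ih2 := dupA (n+1) (by omega)
      have len2 : ∀ w ∈ Nlist (n+2), 2 ≤ w.length := by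
        intro w hw; rw [Nword_len (n+2) w hw]; omega
      rw [show Nlist (n+3) =
        ((Nlist (n+2)).map List.tail).reverse.map (fun w => true :: false :: w) ++
          (Nlist (n+1)).reverse.map (fun w => true :: false :: w) from rfl]
      rw [show Nlist (n+4) =
        ((Nlist (n+3)).map List.tail).reverse.map (fun w => true :: false :: w) ++
          (Nlist (n+2)).reverse.map (fun w => true :: false :: w) from rfl]
      rw [dup_append, List.map_append]
      congr 1
      · -- first components
        rw [dup_map _ _ (fun w _ => glast w), dup_reverse,
          dup_map List.tail _ (by
            intro w hw
            rw [getLast?_tail w (len2 w hw)]),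
          ih1]
        simp only [← List.map_reverse, List.map_map]
        apply List.map_congr_left
        intro w hw
        rw [List.mem_reverse] at hw
        have hlen := Nword_len (n+3) w hw
        have htne : w.tail ≠ [] := by
          intro h
          have := congrArg List.length h
          rw [List.length_tail, hlen] at this
          simp at this
        simp only [Function.comp]
        rw [dropLast_cons2 _ htne, tail_dropLast]
      · -- second components
        rw [dup_map _ _ (fun w _ => glast w), dup_reverse, ih2]
        simp only [← List.map_reverse, List.map_map]
        apply List.map_congr_left
        intro w hw
        rw [List.mem_reverse] at hw
        have hne := Nword_ne_nil (by omega : 1 ≤ n+2) hw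
        simp only [Function.comp]
        rw [dropLast_cons2 _ hne]

lemma getD_map (L : List (List Bool)) (f : List Bool → List Bool) (k : ℕ)
    (hk : k < L.length) : (L.map f).getD k [] = f (L.getD k []) := by
  rw [List.getD_eq_getElem _ _ (by simpa using hk), List.getD_eq_getElem _ _ hk,
    List.getElem_map]

lemma getD_reverse_map (L : List (List Bool)) (f : List Bool → List Bool) (j : ℕ)
    (hj : j < L.length) :
    (L.reverse.map f).getD j [] = f (L.getD (L.length - 1 - j) []) := by
  rw [List.getD_eq_getElem _ _ (by simpa using hj), List.getD_eq_getElem _ _ (by omega),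
    List.getElem_map, List.getElem_reverse]

lemma getD_append_left' (L1 L2 : List (List Bool)) (j : ℕ) (hj : j < L1.length) :
    (L1 ++ L2).getD j [] = L1.getD j [] := by
  rw [List.getD_eq_getElem _ _ (by simp; omega), List.getD_eq_getElem _ _ hj]
  exact List.getElem_append_left hj

lemma getD_append_right' (L1 L2 : List (List Bool)) (j : ℕ) (h1 : L1.length ≤ j)
    (h2 : j - L1.length < L2.length) :
    (L1 ++ L2).getD j [] = L2.getD (j - L1.length) [] := by
  rw [List.getD_eq_getElem _ _ (by simp; omega), List.getD_eq_getElem _ _ h2]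
  exact List.getElem_append_right h1

lemma getD_mem (L : List (List Bool)) (k : ℕ) (hk : k < L.length) : L.getD k [] ∈ L := by
  rw [List.getD_eq_getElem _ _ hk]; exact List.getElem_mem hk

lemma KL : ∀ n, 1 ≤ n → ∀ j, j < Nat.fib (n + 1) →
    ((Nlist (n + 1)).getD j []).getLast? =
      some (fibFixedPoint ((Nat.fib (n + 2) + j) / 2 - 1))
  | 0, h => by omega
  | 1, _ => by
      intro j hj
      have e : Nat.fib (1 + 1) = 1 := rfl
      have : j = 0 := by omega
      subst this
      decide
  | 2, _ => by
      intro j hj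
      have e : Nat.fib (2 + 1) = 2 := rfl
      have : j < 2 := by omega
      interval_cases j <;> decide
  | (n+3), _ => by
      intro j hj
      have hF5 : Nat.fib (n+5) = Nat.fib (n+3) + Nat.fib (n+4) := fib_rec (n+3)
      have hF4 : Nat.fib (n+4) = Nat.fib (n+2) + Nat.fib (n+3) := fib_rec (n+2)
      have hF3 : Nat.fib (n+3) = Nat.fib (n+1) + Nat.fib (n+2) := fib_rec (n+1)
      have hp1 : 1 ≤ Nat.fib (n+1) := Nat.fib_pos.2 (by omega)
      have hp2 : 1 ≤ Nat.fib (n+2) := Nat.fib_pos.2 (by omega)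
      have hj4 : j < Nat.fib (n+4) := hj
      show ((Nlist (n+4)).getD j []).getLast? =
        some (fibFixedPoint ((Nat.fib (n+5) + j) / 2 - 1))
      rw [show Nlist (n+4) =
        ((Nlist (n+3)).map List.tail).reverse.map (fun w => true :: false :: w) ++
          (Nlist (n+2)).reverse.map (fun w => true :: false :: w) from rfl]
      have hlenA : (((Nlist (n+3)).map List.tail).reverse.map
          (fun w => true :: false :: w)).length = Nat.fib (n+3) := by
        simp [Nlen]
      by_cases hc : j < Nat.fib (n+3)
      · rw [getD_append_left' _ _ j (by rw [hlenA]; exact hc)]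
        rw [getD_reverse_map ((Nlist (n+3)).map List.tail) _ j
          (by rw [List.length_map, Nlen]; exact hc)]
        rw [show ((Nlist (n+3)).map List.tail).length = Nat.fib (n+3) by
          rw [List.length_map, Nlen]]
        set m := Nat.fib (n+3) - 1 - j with hm
        have hmlt : m < Nat.fib (n+3) := by omega
        rw [getD_map _ _ m (by rw [Nlen]; exact hmlt)]
        have hw : (Nlist (n+3)).getD m [] ∈ Nlist (n+3) :=
          getD_mem _ m (by rw [Nlen]; exact hmlt)
        have hwl : ((Nlist (n+3)).getD m []).length = n+3 := Nword_len _ _ hw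
        have htne : ((Nlist (n+3)).getD m []).tail ≠ [] := by
          intro h
          have := congrArg List.length h
          rw [List.length_tail, hwl] at this
          simp at this
        rw [getLast?_cons2 _ htne, getLast?_tail _ (by rw [hwl]; omega)]
        have IH : ((Nlist (n+3)).getD m []).getLast? =
            some (fibFixedPoint ((Nat.fib (n+4) + m) / 2 - 1)) :=
          KL (n+2) (by omega) m hmlt
        rw [IH]
        have key : fibFixedPoint ((Nat.fib (n+4) + m) / 2 - 1) =
            fibFixedPoint ((Nat.fib (n+5) + j) / 2 - 1) := by
          apply palin_fp (n+1)
          have e5 : Nat.fib (n+1+4) = Nat.fib (n+5) := rfl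
          omega
        rw [key]
      · rw [getD_append_right' _ _ j (by rw [hlenA]; omega)
          (by rw [hlenA, List.length_map, List.length_reverse, Nlen]; omega)]
        rw [hlenA]
        rw [getD_reverse_map (Nlist (n+2)) _ (j - Nat.fib (n+3))
          (by rw [Nlen]; omega)]
        rw [show (Nlist (n+2)).length = Nat.fib (n+2) from Nlen (n+2)]
        set m := Nat.fib (n+2) - 1 - (j - Nat.fib (n+3)) with hm
        have hmlt : m < Nat.fib (n+2) := by omega
        have hw : (Nlist (n+2)).getD m [] ∈ Nlist (n+2) :=
          getD_mem _ m (by rw [Nlen]; exact hmlt)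
        have hwl : ((Nlist (n+2)).getD m []).length = n+2 := Nword_len _ _ hw
        have hne : (Nlist (n+2)).getD m [] ≠ [] := by
          intro h; rw [h] at hwl; simp at hwl
        rw [getLast?_cons2 _ hne]
        have IH : ((Nlist (n+2)).getD m []).getLast? =
            some (fibFixedPoint ((Nat.fib (n+3) + m) / 2 - 1)) :=
          KL (n+1) (by omega) m hmlt
        rw [IH]
        have key : fibFixedPoint ((Nat.fib (n+3) + m) / 2 - 1) =
            fibFixedPoint ((Nat.fib (n+5) + j) / 2 - 1) := by
          apply palin_fp (n+1)
          have e5 : Nat.fib (n+1+4) = Nat.fib (n+5) := rfl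
          omega
        rw [key]
  termination_by n => n


end GrayAux

open GrayAux in
/-- For every `n ≥ 2`, the list `(h_{F (n+2)}, …, h_{F (n+3) - 1})`
obtained from `N_n = (g_{F (n+1)}, …, g_{F (n+2) - 1})` by keeping each word ending in
`1` once and repeating each word ending in `0` twice consecutively has `F (n+1)`
entries, and `g_i = h_i τ_i` for every `F (n+2) ≤ i ≤ F (n+3) - 1`; that is, this
procedure produces `N_{n+1}` from `N_n`. -/
theorem grayCode_fibonacci_substitution (n : ℕ) (hn : 2 ≤ n) :
    (dupList (Nlist n)).length = Nat.fib (n + 1) ∧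
    ∀ j, j < Nat.fib (n + 1) →
      (Nlist (n + 1)).getD j [] =
        (dupList (Nlist n)).getD j [] ++ [tauDigit (Nat.fib (n + 2) + j)] := by
  constructor
  · rw [dupA n (by omega), List.length_map, Nlen]
  · intro j hj
    have h1 : (dupList (Nlist n)).getD j [] = ((Nlist (n + 1)).getD j []).dropLast := by
      rw [dupA n (by omega), getD_map _ _ j (by rw [Nlen]; exact hj)]
    have h2 := KL n (by omega) j hj
    have hw : (Nlist (n+1)).getD j [] ∈ Nlist (n+1) :=
      getD_mem _ j (by rw [Nlen]; exact hj)
    have hwl : ((Nlist (n+1)).getD j []).length = n+1 := Nword_len _ _ hw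
    have hne : (Nlist (n+1)).getD j [] ≠ [] := by
      intro h; rw [h] at hwl; simp at hwl
    have htau : tauDigit (Nat.fib (n + 2) + j) = fibFixedPoint ((Nat.fib (n + 2) + j) / 2 - 1) := by
      have hp2 : 1 ≤ Nat.fib n := Nat.fib_pos.2 (by omega)
      have hp1 : 1 ≤ Nat.fib (n+1) := Nat.fib_pos.2 (by omega)
      have hF : Nat.fib (n+2) = Nat.fib n + Nat.fib (n+1) := fib_rec n
      rw [tauDigit, if_neg (by omega)]
    have hg : ((Nlist (n+1)).getD j []).getLast hne =
        fibFixedPoint ((Nat.fib (n + 2) + j) / 2 - 1) := by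
      rw [List.getLast?_eq_getLast hne] at h2
      exact Option.some.inj h2
    rw [h1, htau, ← hg, List.dropLast_append_getLast hne]
end

section
/- For every n ≥ 0 and any two states s and s' of the Tower of Hanoi-Fibonacci with n disks, there is a finite sequence of Fibonacci moves transforming s into s'; in other words, the directed graph on the 3^n states whose arcs are the Fibonacci moves is strongly connected. -/
/-- A `k`-Fibonacci move on states of the Tower of Hanoi-Fibonacci with `n` disks.
Disks are numbered `1,…,n`; disk `k` corresponds to index `i : Fin n` with `(i : ℕ) + 1 = k`.
Pegs are `Fin 3` (`0 = A`, `1 = B`, `2 = C`). -/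
def FibMove (n k : ℕ) (s s' : Fin n → Fin 3) : Prop :=
  1 ≤ k ∧ k ≤ n ∧
  ∃ X Y Z : Fin 3, X ≠ Y ∧ Y ≠ Z ∧ X ≠ Z ∧
    (∀ i : Fin n, (i : ℕ) + 1 = k → s i = X) ∧
    (∀ i : Fin n, (i : ℕ) + 1 < k → s i ≠ X) ∧
    (∀ i : Fin n, (i : ℕ) + 1 < k → s i = Y) ∧
    (∀ i : Fin n, ((i : ℕ) + 1 = k ∨ (i : ℕ) + 2 = k) → s' i = Z) ∧
    (∀ i : Fin n, (i : ℕ) + 1 ≠ k → (i : ℕ) + 2 ≠ k → s' i = s i)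

/-- `s 0, s 1, …, s m` is a solution of length `m` of the Tower of Hanoi-Fibonacci
with `n` disks: it starts with all disks on peg `A = 0`, ends with all disks on
peg `C = 2`, and each step is a Fibonacci move. -/
def IsSolution (n m : ℕ) (s : ℕ → (Fin n → Fin 3)) : Prop :=
  (s 0 = fun _ => 0) ∧ (s m = fun _ => 2) ∧ ∀ i < m, ∃ k, FibMove n k (s i) (s (i + 1))

lemma snoc_lt {n : ℕ} (f : Fin n → Fin 3) (x : Fin 3) (i : Fin (n+1)) (h : (i:ℕ) < n) :
    (Fin.snoc f x : Fin (n+1) → Fin 3) i = f ⟨i, h⟩ := by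
  simp [Fin.snoc, h, Fin.castLT]

lemma fibMove_lift {n k : ℕ} {a b : Fin n → Fin 3} (x : Fin 3)
    (h : FibMove n k a b) : FibMove (n+1) k (Fin.snoc a x) (Fin.snoc b x) := by
  obtain ⟨h1, h2, X, Y, Z, hXY, hYZ, hXZ, c1, c2, c3, c4, c5⟩ := h
  refine ⟨h1, h2.trans (Nat.le_succ n), X, Y, Z, hXY, hYZ, hXZ, ?_, ?_, ?_, ?_, ?_⟩
  · intro i hi
    have hlt : (i:ℕ) < n := by omega
    rw [snoc_lt a x i hlt]; exact c1 _ hi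
  · intro i hi
    have hlt : (i:ℕ) < n := by omega
    rw [snoc_lt a x i hlt]; exact c2 _ hi
  · intro i hi
    have hlt : (i:ℕ) < n := by omega
    rw [snoc_lt a x i hlt]; exact c3 _ hi
  · intro i hi
    have hlt : (i:ℕ) < n := by omega
    rw [snoc_lt b x i hlt]; exact c4 _ hi
  · intro i h1' h2'
    rcases Nat.lt_or_ge (i:ℕ) n with hlt | hge
    · rw [snoc_lt b x i hlt, snoc_lt a x i hlt]; exact c5 _ h1' h2'
    · have : i = Fin.last n := Fin.ext (by rw [Fin.val_last]; omega)
      subst this; simp [Fin.snoc_last]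

lemma reach_lift {n : ℕ} (x : Fin 3) {a b : Fin n → Fin 3}
    (h : Relation.ReflTransGen (fun a b => ∃ k, FibMove n k a b) a b) :
    Relation.ReflTransGen (fun a b => ∃ k, FibMove (n+1) k a b)
      (Fin.snoc a x) (Fin.snoc b x) :=
  Relation.ReflTransGen.lift (r := fun a b => ∃ k, FibMove n k a b) (fun f => (Fin.snoc f x : Fin (n+1) → Fin 3))
    (fun _ _ hr => by obtain ⟨k, hk⟩ := hr; exact ⟨k, fibMove_lift x hk⟩) _ _ h

/-- For every `n ≥ 0` and any two states `s, s'` of the Tower of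
Hanoi-Fibonacci with `n` disks, there is a finite sequence of Fibonacci moves
transforming `s` into `s'`: the directed graph on the `3^n` states whose arcs are the
Fibonacci moves is strongly connected. -/
theorem hanoiFibonacci_strongly_connected (n : ℕ) (s s' : Fin n → Fin 3) :
    Relation.ReflTransGen (fun a b => ∃ k, FibMove n k a b) s s' := by
  induction n with
  | zero =>
    have : s = s' := funext fun i => i.elim0
    rw [this]
  | succ n ih =>
    by_cases h : s (Fin.last n) = s' (Fin.last n)
    · have H := reach_lift (s' (Fin.last n)) (ih (Fin.init s) (Fin.init s'))
      rwa [Fin.snoc_init_self, ← h, Fin.snoc_init_self] at H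
    · set X := s (Fin.last n) with hX
      set X' := s' (Fin.last n) with hX'
      obtain ⟨Y, hY1, hY2⟩ : ∃ Y : Fin 3, Y ≠ X ∧ Y ≠ X' := by
        have key : ∀ a b : Fin 3, a ≠ b → ∃ c : Fin 3, c ≠ a ∧ c ≠ b := by decide
        exact key X X' h
      have step1 := reach_lift X (ih (Fin.init s) (fun _ => Y))
      rw [Fin.snoc_init_self] at step1
      set t₀ : Fin n → Fin 3 := fun i => if (i:ℕ)+2 = n+1 then X' else Y with ht₀
      have step2 : FibMove (n+1) (n+1) (Fin.snoc (fun _ => Y) X) (Fin.snoc t₀ X') := by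
        refine ⟨by omega, le_refl _, X, Y, X', fun e => hY1 e.symm, hY2, h, ?_, ?_, ?_, ?_, ?_⟩
        · intro i hi
          have : i = Fin.last n := Fin.ext (by rw [Fin.val_last]; omega)
          subst this; simp [Fin.snoc_last]
        · intro i hi
          have hlt : (i:ℕ) < n := by omega
          rw [snoc_lt _ X i hlt]
          exact fun e => hY1 e
        · intro i hi
          have hlt : (i:ℕ) < n := by omega
          rw [snoc_lt _ X i hlt]
        · intro i hi
          rcases hi with hi | hi
          · have : i = Fin.last n := Fin.ext (by rw [Fin.val_last]; omega)
            subst this; simp [Fin.snoc_last]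
          · have hlt : (i:ℕ) < n := by omega
            rw [snoc_lt _ X' i hlt, ht₀]
            simp only []
            rw [if_pos hi]
        · intro i h1' h2'
          have hlt : (i:ℕ) < n := by omega
          rw [snoc_lt _ X' i hlt, snoc_lt _ X i hlt, ht₀]
          simp only []
          rw [if_neg h2']
      have step3 := reach_lift X' (ih t₀ (Fin.init s'))
      rw [Fin.snoc_init_self] at step3
      exact (step1.trans (Relation.ReflTransGen.single ⟨n+1, step2⟩)).trans step3
end
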